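/- For v in a Hilbert tensor product space and ε > 0, the SVD truncation R_ε(v) (truncation to the minimal rank r_ε with tail ∑_{k > r_ε} σ_k² ≤ ε²) is a minimizer of rank over the ball {w : ‖v − w‖ ≤ ε}: for every w with ‖v − w‖ ≤ ε, rank(w) ≥ rank(R_ε(v)). -/

import Mathlib

open scoped ComplexInnerProductSpace

lemma parseval_hasSum {E : Type*} [NormedAddCommGroup E] [InnerProductSpace ℂ E]
    {κ : Type*} (c : HilbertBasis κ ℂ E) (x : E) :
    HasSum (fun i => ‖⟪c i, x⟫‖ ^ 2) (‖x‖ ^ 2) := by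
  have h := c.hasSum_inner_mul_inner x x
  have h2 : ∀ i, ⟪x, c i⟫ * ⟪c i, x⟫ = ((‖⟪c i, x⟫‖ ^ 2 : ℝ) : ℂ) := by
    intro i
    rw [← inner_conj_symm (c i) x, RCLike.mul_conj, RCLike.norm_conj]
    norm_cast
  have h3 : (⟪x, x⟫ : ℂ) = ((‖x‖ ^ 2 : ℝ) : ℂ) := by
    rw [inner_self_eq_norm_sq_to_K]; norm_cast
  rw [h3] at h
  rw [← Complex.hasSum_ofReal]
  simpa only [h2] using h

lemma parseval_enn {E : Type*} [NormedAddCommGroup E] [InnerProductSpace ℂ E]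
    {κ : Type*} (c : HilbertBasis κ ℂ E) (x : E) :
    (∑' i, ENNReal.ofReal (‖⟪c i, x⟫‖ ^ 2)) = ENNReal.ofReal (‖x‖ ^ 2) := by
  rw [← ENNReal.ofReal_tsum_of_nonneg (fun i => by positivity) (parseval_hasSum c x).summable,
    (parseval_hasSum c x).tsum_eq]

open ContinuousLinearMap in
lemma hs_bound {E F : Type*} [NormedAddCommGroup E] [InnerProductSpace ℂ E] [CompleteSpace E]
    [NormedAddCommGroup F] [InnerProductSpace ℂ F] [CompleteSpace F]
    (T : E →L[ℂ] F) {ι : Type*} (b : HilbertBasis ι ℂ E)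
    {n : ℕ} {u : Fin n → E} (hu : Orthonormal ℂ u) :
    ∑ j, ENNReal.ofReal (‖T (u j)‖ ^ 2) ≤ ∑' i, ENNReal.ofReal (‖T (b i)‖ ^ 2) := by
  obtain ⟨s, c, -⟩ := exists_hilbertBasis ℂ F
  calc ∑ j, ENNReal.ofReal (‖T (u j)‖ ^ 2)
      = ∑ j, ∑' i', ENNReal.ofReal (‖⟪c i', T (u j)⟫‖ ^ 2) := by
        simp_rw [parseval_enn]
    _ = ∑' i', ∑ j, ENNReal.ofReal (‖⟪c i', T (u j)⟫‖ ^ 2) := by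
        exact (Summable.tsum_finsetSum (fun j _ => ENNReal.summable)).symm
    _ ≤ ∑' i', ENNReal.ofReal (‖adjoint T (c i')‖ ^ 2) := by
        refine ENNReal.tsum_le_tsum fun i' => ?_
        rw [← ENNReal.ofReal_sum_of_nonneg (fun j _ => by positivity)]
        refine ENNReal.ofReal_le_ofReal ?_
        have : ∀ j, ‖⟪c i', T (u j)⟫‖ = ‖⟪u j, adjoint T (c i')⟫‖ := fun j => by
          rw [← ContinuousLinearMap.adjoint_inner_left, norm_inner_symm]
        simp_rw [this]
        exact hu.sum_inner_products_le (adjoint T (c i'))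
    _ = ∑' i', ∑' i, ENNReal.ofReal (‖⟪b i, adjoint T (c i')⟫‖ ^ 2) := by
        simp_rw [parseval_enn]
    _ = ∑' i, ∑' i', ENNReal.ofReal (‖⟪b i, adjoint T (c i')⟫‖ ^ 2) := ENNReal.tsum_comm
    _ = ∑' i, ENNReal.ofReal (‖T (b i)‖ ^ 2) := by
        refine tsum_congr fun i => ?_
        have : ∀ i', ‖⟪b i, adjoint T (c i')⟫‖ = ‖⟪c i', T (b i)⟫‖ := fun i' => by
          rw [← norm_inner_symm, ContinuousLinearMap.adjoint_inner_left]
        simp_rw [this, parseval_enn]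

lemma rearr (σ : ℕ → ℝ) (hσ : Antitone σ) (hσ0 : ∀ k, 0 ≤ σ k)
    (d N n : ℕ) (hn : n ≤ N + d)
    (p : ℕ → ℝ) (hp0 : ∀ k, 0 ≤ p k) (hp1 : ∀ k, p k ≤ 1)
    (hpsum : ∑ k ∈ Finset.range n, p k = N) :
    ∑ k ∈ Finset.Ico d n, σ k ^ 2 ≤ ∑ k ∈ Finset.range n, σ k ^ 2 * p k := by
  rcases le_or_gt n d with h | h
  · rw [Finset.Ico_eq_empty (by omega)]
    simpa using Finset.sum_nonneg fun k _ => mul_nonneg (by positivity) (hp0 k)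
  have hdn : d ≤ n := h.le
  have hsplit : ∀ g : ℕ → ℝ, ∑ k ∈ Finset.range n, g k
      = ∑ k ∈ Finset.Ico 0 d, g k + ∑ k ∈ Finset.Ico d n, g k := fun g => by
    rw [Finset.range_eq_Ico, ← Finset.sum_Ico_consecutive _ (Nat.zero_le d) hdn]
  set P1 := ∑ k ∈ Finset.Ico 0 d, p k with hP1def
  set P2 := ∑ k ∈ Finset.Ico d n, p k with hP2def
  have hPN : P1 + P2 = N := by rw [hP1def, hP2def, ← hsplit p, hpsum]
  have hA : σ d ^ 2 * P1 ≤ ∑ k ∈ Finset.Ico 0 d, σ k ^ 2 * p k := by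
    rw [hP1def, Finset.mul_sum]
    refine Finset.sum_le_sum fun k hk => ?_
    have hk' : k ≤ d := (Finset.mem_Ico.1 hk).2.le
    exact mul_le_mul_of_nonneg_right (pow_le_pow_left₀ (hσ0 d) (hσ hk') 2) (hp0 k)
  have hB : ∑ k ∈ Finset.Ico d n, σ k ^ 2 * (1 - p k)
      ≤ σ d ^ 2 * (((n - d : ℕ) : ℝ) - P2) := by
    have h1 : ∑ k ∈ Finset.Ico d n, σ k ^ 2 * (1 - p k)
        ≤ ∑ k ∈ Finset.Ico d n, σ d ^ 2 * (1 - p k) := by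
      refine Finset.sum_le_sum fun k hk => ?_
      have hk' : d ≤ k := (Finset.mem_Ico.1 hk).1
      exact mul_le_mul_of_nonneg_right (pow_le_pow_left₀ (hσ0 k) (hσ hk') 2)
        (by linarith [hp1 k])
    calc ∑ k ∈ Finset.Ico d n, σ k ^ 2 * (1 - p k) ≤ _ := h1
      _ = σ d ^ 2 * (((n - d : ℕ) : ℝ) - P2) := by
        rw [← Finset.mul_sum, Finset.sum_sub_distrib, Finset.sum_const, Nat.card_Ico]
        simp [hP2def]
  have hcard : (((n - d : ℕ)) : ℝ) ≤ (N : ℝ) := by exact_mod_cast (by omega : n - d ≤ N)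
  have hσd : (0:ℝ) ≤ σ d ^ 2 := by positivity
  have hfin : σ d ^ 2 * (((n - d : ℕ) : ℝ) - P2) ≤ σ d ^ 2 * P1 := by
    apply mul_le_mul_of_nonneg_left _ hσd; linarith
  have hsum2 : ∑ k ∈ Finset.Ico d n, σ k ^ 2
      = ∑ k ∈ Finset.Ico d n, σ k ^ 2 * p k + ∑ k ∈ Finset.Ico d n, σ k ^ 2 * (1 - p k) := by
    rw [← Finset.sum_add_distrib]
    exact Finset.sum_congr rfl fun k _ => by ring
  rw [hsplit (fun k => σ k ^ 2 * p k)]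
  linarith

open scoped ComplexInnerProductSpace in
theorem stmt_19 {E F : Type*}
    [NormedAddCommGroup E] [InnerProductSpace ℂ E] [CompleteSpace E]
    [NormedAddCommGroup F] [InnerProductSpace ℂ F] [CompleteSpace F]
    (v : E →L[ℂ] F) (σ : ℕ → ℝ) (e : ℕ → E) (f : ℕ → F)
    (he : Orthonormal ℂ e) (hf : Orthonormal ℂ f)
    (hσ : Antitone σ) (hσ0 : ∀ k, 0 ≤ σ k) (hσ2 : Summable (fun k => σ k ^ 2))
    (hv : ∀ x, v x = ∑' k, (σ k : ℂ) • (⟪e k, x⟫ • f k))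
    (ε : ℝ) (hε : 0 < ε)
    (rε : ℕ) (hrε : rε = sInf {r : ℕ | ∑' k, (if r ≤ k then σ k ^ 2 else 0) ≤ ε ^ 2})
    {ι : Type*} (b : HilbertBasis ι ℂ E) :
    (∑' k, (if rε ≤ k then σ k ^ 2 else 0)) ≤ ε ^ 2 ∧
      ∀ w : E →L[ℂ] F, Summable (fun i => ‖v (b i) - w (b i)‖ ^ 2) →
        (∑' i, ‖v (b i) - w (b i)‖ ^ 2) ≤ ε ^ 2 →
        (rε : Cardinal) ≤ Module.rank ℂ (LinearMap.range (w : E →ₗ[ℂ] F)) := by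
  classical
  have hmask : ∀ r : ℕ, Summable (fun k => if r ≤ k then σ k ^ 2 else 0) := fun r =>
    Summable.of_nonneg_of_le (fun k => by split <;> positivity)
      (fun k => by split <;> first | rfl | positivity) hσ2
  have hSne : {r : ℕ | ∑' k, (if r ≤ k then σ k ^ 2 else 0) ≤ ε ^ 2}.Nonempty := by
    have hTail : ∀ r : ℕ, (∑' k, (if r ≤ k then σ k ^ 2 else 0))
        = (∑' k, σ k ^ 2) - ∑ k ∈ Finset.range r, σ k ^ 2 := by
      intro r
      have hmask2 : Summable (fun k => if r ≤ k then 0 else σ k ^ 2) :=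
        Summable.of_nonneg_of_le (fun k => by split <;> positivity)
          (fun k => by split <;> first | rfl | positivity) hσ2
      have h2 : (∑' k, (if r ≤ k then 0 else σ k ^ 2)) = ∑ k ∈ Finset.range r, σ k ^ 2 := by
        rw [tsum_eq_sum (s := Finset.range r)
          (fun k hk => by rw [if_pos (by simpa using hk)])]
        exact Finset.sum_congr rfl fun k hk =>
          by rw [if_neg (by simpa using Finset.mem_range.1 hk)]
      have h3 : (∑' k, σ k ^ 2)
          = (∑' k, (if r ≤ k then σ k ^ 2 else 0)) + (∑' k, (if r ≤ k then 0 else σ k ^ 2)) := by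
        rw [← Summable.tsum_add (hmask r) hmask2]
        exact tsum_congr fun k => by split <;> simp
      rw [h3, h2]; ring
    have hlim : Filter.Tendsto (fun r => (∑' k, σ k ^ 2) - ∑ k ∈ Finset.range r, σ k ^ 2)
        Filter.atTop (nhds 0) := by
      have := hσ2.hasSum.tendsto_sum_nat
      have h := Filter.Tendsto.sub (tendsto_const_nhds (x := ∑' k, σ k ^ 2)) this
      simpa using h
    obtain ⟨r, hr⟩ := (hlim.eventually_lt_const (by positivity : (0:ℝ) < ε ^ 2)).exists
    exact ⟨r, by rw [Set.mem_setOf_eq, hTail r]; exact hr.le⟩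
  have h1 : (∑' k, (if rε ≤ k then σ k ^ 2 else 0)) ≤ ε ^ 2 := by
    have := Nat.sInf_mem hSne
    rw [← hrε] at this
    exact this
  refine ⟨h1, ?_⟩
  intro w hsum hle
  by_contra hcon
  push_neg at hcon
  haveI hfin : Module.Finite ℂ (LinearMap.range (w : E →ₗ[ℂ] F)) := by
    rw [← Module.rank_lt_aleph0_iff]
    exact hcon.trans (Cardinal.nat_lt_aleph0 rε)
  set d := Module.finrank ℂ (LinearMap.range (w : E →ₗ[ℂ] F)) with hd
  have hdrank : (d : Cardinal) = Module.rank ℂ (LinearMap.range (w : E →ₗ[ℂ] F)) :=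
    Module.finrank_eq_rank ℂ _
  have hdlt : d < rε := by
    rw [← hdrank] at hcon
    exact_mod_cast hcon
  have hdS : ¬ (∑' k, (if d ≤ k then σ k ^ 2 else 0)) ≤ ε ^ 2 := by
    intro hmem
    have : rε ≤ d := hrε ▸ Nat.sInf_le hmem
    omega
  have hkey : (∑' k, (if d ≤ k then σ k ^ 2 else 0)) ≤ ∑' i, ‖v (b i) - w (b i)‖ ^ 2 := by
    refine Summable.tsum_le_of_sum_le (hmask d) fun s => ?_
    set m := max (s.sup id) d with hm
    set n := m + 1 with hn
    have hstep1 : ∑ k ∈ s, (if d ≤ k then σ k ^ 2 else 0)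
        ≤ ∑ k ∈ Finset.range n, (if d ≤ k then σ k ^ 2 else 0) := by
      refine Finset.sum_le_sum_of_subset_of_nonneg ?_ (fun k _ _ => by split <;> positivity)
      intro k hk
      have : k ≤ s.sup id := Finset.le_sup (f := id) hk
      exact Finset.mem_range.2 (by omega)
    have hstep2 : ∑ k ∈ Finset.range n, (if d ≤ k then σ k ^ 2 else 0)
        = ∑ k ∈ Finset.Ico d n, σ k ^ 2 := by
      rw [← Finset.sum_filter]
      congr 1
      ext k
      simp only [Finset.mem_filter, Finset.mem_range, Finset.mem_Ico]
      omega
    have hcore : ∑ k ∈ Finset.Ico d n, σ k ^ 2 ≤ ∑' i, ‖v (b i) - w (b i)‖ ^ 2 := by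
      set U : Submodule ℂ E := Submodule.span ℂ (Set.range (fun j : Fin n => e j)) with hU
      have hefin : Orthonormal ℂ (fun j : Fin n => e (j : ℕ)) := he.comp _ Fin.val_injective
      haveI hUfd : FiniteDimensional ℂ U := FiniteDimensional.span_of_finite ℂ (Set.finite_range _)
      have hUrank : Module.finrank ℂ U = n := by
        rw [hU, finrank_span_eq_card hefin.linearIndependent, Fintype.card_fin]
      set W : U →ₗ[ℂ] F := (w : E →ₗ[ℂ] F).domRestrict U with hW
      have hrange : LinearMap.range W ≤ LinearMap.range (w : E →ₗ[ℂ] F) := by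
        rintro x ⟨y, rfl⟩
        exact ⟨y, rfl⟩
      have hrankW : Module.finrank ℂ (LinearMap.range W) ≤ d := Submodule.finrank_mono hrange
      have hNn : n ≤ Module.finrank ℂ (LinearMap.ker W) + d := by
        have hrn := LinearMap.finrank_range_add_finrank_ker W
        rw [hUrank] at hrn
        omega
      set N := Module.finrank ℂ (LinearMap.ker W) with hN
      set ob := stdOrthonormalBasis ℂ (LinearMap.ker W) with hob
      set u : Fin N → E := fun j => (((ob j : LinearMap.ker W) : U) : E) with hu_def
      have hu : Orthonormal ℂ u := by
        rw [orthonormal_iff_ite]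
        intro i j
        have h := ob.orthonormal
        rw [orthonormal_iff_ite] at h
        have h2 := h i j
        rwa [Submodule.coe_inner, Submodule.coe_inner] at h2
      have huU : ∀ j, u j ∈ U := fun j => ((ob j : LinearMap.ker W) : U).2
      have huker : ∀ j, w (u j) = 0 := by
        intro j
        have h2 : ((ob j : LinearMap.ker W) : U) ∈ LinearMap.ker W := (ob j).2
        rw [LinearMap.mem_ker] at h2
        exact h2
      have hzero : ∀ x ∈ U, ∀ k, n ≤ k → ⟪e k, x⟫ = 0 := by
        intro x hx k hk
        have hle2 : U ≤ LinearMap.ker ((innerSL ℂ (e k) : E →L[ℂ] ℂ) : E →ₗ[ℂ] ℂ) := by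
          rw [hU, Submodule.span_le]
          rintro y ⟨j, rfl⟩
          have : (k : ℕ) ≠ (j : ℕ) := by have := j.2; omega
          simpa using he.2 this
        simpa using hle2 hx
      have hPar : ∀ x ∈ U, ∑ k ∈ Finset.range n, ‖⟪e k, x⟫‖ ^ 2 = ‖x‖ ^ 2 := by
        intro x hx
        rw [hU] at hx
        obtain ⟨c, rfl⟩ := Submodule.mem_span_range_iff_exists_fun ℂ |>.1 hx
        have hco : ∀ j : Fin n, ⟪e (j : ℕ), ∑ i, c i • e (i : ℕ)⟫ = c j := fun j =>
          hefin.inner_right_fintype c j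
        have hinner : (⟪(∑ i, c i • e (i : ℕ)), ∑ i, c i • e (i : ℕ)⟫ : ℂ)
            = ((∑ j : Fin n, ‖c j‖ ^ 2 : ℝ) : ℂ) := by
          rw [show (∑ i, c i • e (i : ℕ)) = ∑ i ∈ Finset.univ, c i • e (i : ℕ) from rfl,
            hefin.inner_sum c c Finset.univ]
          push_cast
          exact Finset.sum_congr rfl fun j _ => by rw [RCLike.conj_mul]; norm_cast
        have hnorm : ‖∑ i, c i • e (i : ℕ)‖ ^ 2 = ∑ j : Fin n, ‖c j‖ ^ 2 := by
          have h3 := inner_self_eq_norm_sq_to_K (𝕜 := ℂ) (∑ i, c i • e (i : ℕ))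
          rw [hinner] at h3
          simp only [← RCLike.ofReal_pow] at h3
          exact (Complex.ofReal_inj.mp h3).symm
        rw [hnorm, Finset.sum_range fun k => ‖⟪e k, ∑ i, c i • e (i : ℕ)⟫‖ ^ 2]
        exact Finset.sum_congr rfl fun j _ => by rw [hco j]
      have hvnorm : ∀ x ∈ U, ‖v x‖ ^ 2 = ∑ k ∈ Finset.range n, σ k ^ 2 * ‖⟪e k, x⟫‖ ^ 2 := by
        intro x hx
        have hvx : v x = ∑ k ∈ Finset.range n, ((σ k : ℂ) * ⟪e k, x⟫) • f k := by
          rw [hv x, tsum_eq_sum (s := Finset.range n) ?_]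
          · exact Finset.sum_congr rfl fun k _ => by rw [smul_smul]
          · intro k hk
            rw [hzero x hx k (by simpa using hk)]
            simp
        have hterm : ∀ k, (starRingEnd ℂ) ((σ k : ℂ) * ⟪e k, x⟫) * ((σ k : ℂ) * ⟪e k, x⟫)
            = ((σ k ^ 2 * ‖⟪e k, x⟫‖ ^ 2 : ℝ) : ℂ) := by
          intro k
          rw [RCLike.conj_mul, ← RCLike.ofReal_pow]
          refine congrArg Complex.ofReal ?_
          rw [norm_mul, mul_pow, Complex.norm_real, Real.norm_eq_abs, abs_of_nonneg (hσ0 k)]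
          simp
        have hinner : (⟪v x, v x⟫ : ℂ)
            = ((∑ k ∈ Finset.range n, σ k ^ 2 * ‖⟪e k, x⟫‖ ^ 2 : ℝ) : ℂ) := by
          rw [hvx, hf.inner_sum _ _ (Finset.range n)]
          simp_rw [hterm]
          norm_cast
        have h3 := inner_self_eq_norm_sq_to_K (𝕜 := ℂ) (v x)
        rw [hinner] at h3
        simp only [← RCLike.ofReal_pow] at h3
        exact (Complex.ofReal_inj.mp h3).symm
      set p : ℕ → ℝ := fun k => ∑ j : Fin N, ‖⟪e k, u j⟫‖ ^ 2 with hp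
      have hp0 : ∀ k, 0 ≤ p k := fun k => Finset.sum_nonneg fun j _ => by positivity
      have hp1 : ∀ k, p k ≤ 1 := by
        intro k
        have hb2 : ∑ j ∈ (Finset.univ : Finset (Fin N)), ‖⟪u j, e k⟫‖ ^ 2 ≤ ‖e k‖ ^ 2 :=
          hu.sum_inner_products_le (e k)
        have heq : p k = ∑ j : Fin N, ‖⟪u j, e k⟫‖ ^ 2 :=
          Finset.sum_congr rfl fun j _ => by rw [norm_inner_symm]
        rw [heq]
        calc ∑ j : Fin N, ‖⟪u j, e k⟫‖ ^ 2 ≤ ‖e k‖ ^ 2 := hb2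
          _ = 1 := by rw [he.1 k]; norm_num
      have hpsum : ∑ k ∈ Finset.range n, p k = N := by
        have hone : ∀ j : Fin N, ∑ k ∈ Finset.range n, ‖⟪e k, u j⟫‖ ^ 2 = 1 := by
          intro j
          rw [hPar (u j) (huU j), hu.1 j]
          norm_num
        rw [hp, Finset.sum_comm]
        rw [Finset.sum_congr rfl fun j (_ : j ∈ Finset.univ) => hone j, Finset.sum_const,
          Finset.card_univ, Fintype.card_fin, nsmul_eq_mul, mul_one]
      have hlow : ∑ k ∈ Finset.Ico d n, σ k ^ 2 ≤ ∑ j : Fin N, ‖v (u j)‖ ^ 2 := by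
        refine (rearr σ hσ hσ0 d N n hNn p hp0 hp1 hpsum).trans (le_of_eq ?_)
        calc ∑ k ∈ Finset.range n, σ k ^ 2 * p k
            = ∑ k ∈ Finset.range n, ∑ j : Fin N, σ k ^ 2 * ‖⟪e k, u j⟫‖ ^ 2 := by
              exact Finset.sum_congr rfl fun k _ => by rw [hp, Finset.mul_sum]
          _ = ∑ j : Fin N, ∑ k ∈ Finset.range n, σ k ^ 2 * ‖⟪e k, u j⟫‖ ^ 2 :=
              Finset.sum_comm
          _ = ∑ j : Fin N, ‖v (u j)‖ ^ 2 :=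
              Finset.sum_congr rfl fun j _ => (hvnorm (u j) (huU j)).symm
      have hEN := hs_bound (v - w) b hu
      have hvw_u : ∀ j, (v - w) (u j) = v (u j) := fun j => by
        rw [ContinuousLinearMap.sub_apply, huker j, sub_zero]
      have hL : (∑ j, ENNReal.ofReal (‖(v - w) (u j)‖ ^ 2))
          = ENNReal.ofReal (∑ j : Fin N, ‖v (u j)‖ ^ 2) := by
        rw [ENNReal.ofReal_sum_of_nonneg (fun j _ => by positivity)]
        exact Finset.sum_congr rfl fun j _ => by rw [hvw_u j]
      have hR : (∑' i, ENNReal.ofReal (‖(v - w) (b i)‖ ^ 2))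
          = ENNReal.ofReal (∑' i, ‖v (b i) - w (b i)‖ ^ 2) := by
        rw [ENNReal.ofReal_tsum_of_nonneg (fun i => by positivity) hsum]
        exact tsum_congr fun i => by rw [ContinuousLinearMap.sub_apply]
      rw [hL, hR] at hEN
      have hD0 : (0:ℝ) ≤ ∑' i, ‖v (b i) - w (b i)‖ ^ 2 := tsum_nonneg fun i => by positivity
      have hfin2 := (ENNReal.ofReal_le_ofReal_iff hD0).1 hEN
      linarith
    calc ∑ k ∈ s, (if d ≤ k then σ k ^ 2 else 0) ≤ _ := hstep1
      _ = _ := hstep2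
      _ ≤ _ := hcore
  exact hdS (hkey.trans hle)
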